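/- arXiv:2408.11136 — 3 statements merged into one kernel-verified Lean document; each statement's English description precedes it below -/
import Mathlib

section
/- Let m be a natural number, r > 0, and let P ⊆ ℂ^m be an open set. Let f be a holomorphic function on (D_r ∖ {0}) × P, where D_r = {t ∈ ℂ : |t| < r}. Assume that for every a ∈ P the one-variable function t ↦ f(t,a), defined on D_r ∖ {0}, extends to a holomorphic function on D_r. Then f extends to a holomorphic function on D_r × P; that is, there exists a holomorphic function F : D_r × P → ℂ agreeing with f on (D_r ∖ {0}) × P. -/
open Metric Set MeasureTheory Complex

/-- Cauchy estimate for the Fréchet derivative of a holomorphic function on a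
normed complex space, in terms of a bound on a closed ball. -/
theorem cauchy_fderiv_bound {E : Type*} [NormedAddCommGroup E] [NormedSpace ℂ E]
    {f : E → ℂ} {S : Set E} (hS : IsOpen S) (hf : DifferentiableOn ℂ f S)
    {q : E} {δ M : ℝ} (hδ : 0 < δ) (hM : 0 ≤ M)
    (hsub : closedBall q δ ⊆ S) (hbound : ∀ x ∈ closedBall q δ, ‖f x‖ ≤ M) :
    ‖fderiv ℂ f q‖ ≤ 2 * M / δ := by
  refine ContinuousLinearMap.opNorm_le_bound _ (by positivity) fun v => ?_
  rcases eq_or_ne v 0 with rfl | hv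
  · simp
  have hv' : (0:ℝ) < ‖v‖ := norm_pos_iff.2 hv
  set R : ℝ := δ / (2 * ‖v‖) with hR
  have hRpos : 0 < R := by positivity
  set g : ℂ → ℂ := fun s => f (q + s • v) with hg
  have hmem : ∀ s : ℂ, s ∈ closedBall (0:ℂ) R → q + s • v ∈ closedBall q δ := by
    intro s hs
    have : ‖s • v‖ ≤ R * ‖v‖ := by
      rw [norm_smul]
      exact mul_le_mul_of_nonneg_right (by simpa using mem_closedBall_zero_iff.1 hs) hv'.le
    have hle : R * ‖v‖ ≤ δ := by
      rw [hR]; rw [div_mul_eq_mul_div]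
      rw [div_le_iff₀ (by positivity)]
      nlinarith [hv'.le]
    simp only [mem_closedBall, dist_eq_norm]
    simpa using this.trans hle
  have hgd : ∀ s ∈ closedBall (0:ℂ) R, DifferentiableAt ℂ g s := by
    intro s hs
    have h1 : DifferentiableAt ℂ (fun s : ℂ => q + s • v) s :=
      (differentiableAt_const q).add (differentiableAt_id.smul_const v)
    exact (hf.differentiableAt (hS.mem_nhds (hsub (hmem s hs)))).comp s h1
  have hdc : DiffContOnCl ℂ g (ball (0:ℂ) R) := by
    apply DifferentiableOn.diffContOnCl
    rw [closure_ball (0:ℂ) hRpos.ne']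
    exact fun s hs => (hgd s hs).differentiableWithinAt
  have hsb : ∀ z ∈ sphere (0:ℂ) R, ‖g z‖ ≤ M := fun z hz =>
    hbound _ (hmem z (sphere_subset_closedBall hz))
  have hder : ‖deriv g 0‖ ≤ M / R :=
    Complex.norm_deriv_le_of_forall_mem_sphere_norm_le hRpos hdc hsb
  have hline : HasDerivAt (fun s : ℂ => q + s • v) v 0 := by
    simpa using ((hasDerivAt_id (0:ℂ)).smul_const v).const_add q
  have hfd : HasDerivAt g (fderiv ℂ f q v) 0 := by
    have hfq : HasFDerivAt f (fderiv ℂ f q) q :=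
      (hf.differentiableAt (hS.mem_nhds (hsub (mem_closedBall_self hδ.le)))).hasFDerivAt
    have hfq' : HasFDerivAt f (fderiv ℂ f q) (q + (0:ℂ) • v) := by simpa using hfq
    exact hfq'.comp_hasDerivAt (0:ℂ) hline
  calc ‖fderiv ℂ f q v‖ = ‖deriv g 0‖ := by rw [hfd.deriv]
    _ ≤ M / R := hder
    _ = 2 * M / δ * ‖v‖ := by
        rw [hR]; field_simp

set_option maxHeartbeats 2000000 in
set_option synthInstance.maxHeartbeats 1000000 in
/-- Purely even case of the lemma on regular extension of holomorphic functions
across the divisor `t = 0`: if `f` is holomorphic on `(D_r \ {0}) × P` and for every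
`a ∈ P` the slice `t ↦ f (t, a)` extends holomorphically over `D_r`, then `f` extends
to a holomorphic function on `D_r × P`. -/
theorem stmt0 (m : ℕ) (r : ℝ) (hr : 0 < r) (P : Set (Fin m → ℂ)) (hP : IsOpen P)
    (f : ℂ × (Fin m → ℂ) → ℂ)
    (hf : DifferentiableOn ℂ f ((ball (0 : ℂ) r \ {0}) ×ˢ P))
    (hext : ∀ a ∈ P, ∃ g : ℂ → ℂ, DifferentiableOn ℂ g (ball (0 : ℂ) r) ∧
      ∀ t ∈ ball (0 : ℂ) r \ {0}, g t = f (t, a)) :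
    ∃ F : ℂ × (Fin m → ℂ) → ℂ, DifferentiableOn ℂ F (ball (0 : ℂ) r ×ˢ P) ∧
      ∀ p ∈ (ball (0 : ℂ) r \ {0}) ×ˢ P, F p = f p := by
  classical
  set S : Set (ℂ × (Fin m → ℂ)) := (ball (0 : ℂ) r \ {0}) ×ˢ P with hSdef
  have hSopen : IsOpen S := (isOpen_ball.sdiff isClosed_singleton).prod hP
  -- the chosen slice extensions
  set g : (Fin m → ℂ) → ℂ → ℂ :=
    fun a => if h : a ∈ P then (hext a h).choose else fun _ => 0 with hgdef
  have hgd : ∀ a ∈ P, DifferentiableOn ℂ (g a) (ball (0 : ℂ) r) := by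
    intro a ha; rw [hgdef]; simp only [dif_pos ha]; exact (hext a ha).choose_spec.1
  have hgf : ∀ a ∈ P, ∀ t ∈ ball (0 : ℂ) r \ {0}, g a t = f (t, a) := by
    intro a ha; rw [hgdef]; simp only [dif_pos ha]; exact (hext a ha).choose_spec.2
  set F : ℂ × (Fin m → ℂ) → ℂ := fun p => if p.1 = 0 then g p.2 0 else f p with hFdef
  have hFf : ∀ p ∈ S, F p = f p := by
    intro p hp
    have : p.1 ≠ 0 := (mem_prod.1 hp).1.2
    simp [hFdef, this]
  refine ⟨F, ?_, hFf⟩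
  rintro ⟨t0, a0⟩ hp0
  rw [mem_prod] at hp0
  obtain ⟨hp1, hp2⟩ := hp0
  by_cases h0 : t0 = 0
  · subst h0
    -- the hard case: joint differentiability across t = 0
    set ρ : ℝ := r / 2 with hρdef
    have hρ : 0 < ρ := by positivity
    have hρr : ρ < r := by rw [hρdef]; linarith
    obtain ⟨ε, hε, hεP⟩ : ∃ ε > 0, closedBall a0 ε ⊆ P :=
      (Metric.nhds_basis_closedBall.mem_iff).1 (hP.mem_nhds hp2)
    set K : Set (ℂ × (Fin m → ℂ)) := sphere (0 : ℂ) ρ ×ˢ closedBall a0 ε with hKdef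
    have hK : IsCompact K := (isCompact_sphere _ _).prod (isCompact_closedBall _ _)
    have hKS : K ⊆ S := by
      rintro ⟨w, a⟩ ⟨hw, ha⟩
      have hwρ : ‖w‖ = ρ := by simpa [dist_eq_norm] using hw
      refine ⟨⟨?_, ?_⟩, hεP ha⟩
      · simp only [mem_ball, dist_eq_norm, sub_zero]; rw [hwρ]; exact hρr
      · simp only [mem_singleton_iff]
        intro h; rw [h] at hwρ; simp at hwρ; exact hρ.ne' hwρ.symm
    obtain ⟨δ, hδ, hδS⟩ := hK.exists_cthickening_subset_open hSopen hKS
    have hK' : IsCompact (Metric.cthickening δ K) := hK.cthickening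
    obtain ⟨M0, hM0⟩ := hK'.exists_bound_of_continuousOn (hf.continuousOn.mono hδS)
    set M : ℝ := max M0 0 with hMdef
    have hM : 0 ≤ M := le_max_right _ _
    have hMb : ∀ q ∈ Metric.cthickening δ K, ‖f q‖ ≤ M :=
      fun q hq => (hM0 q hq).trans (le_max_left _ _)
    set C : ℝ := 2 * M / δ with hCdef
    have hC : 0 ≤ C := by positivity
    have hCb : ∀ q ∈ K, ‖fderiv ℂ f q‖ ≤ C := by
      intro q hq
      refine cauchy_fderiv_bound hSopen hf hδ hM ?_ ?_
      · exact (Metric.closedBall_subset_cthickening hq δ).trans hδS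
      · exact fun x hx => hMb x (Metric.closedBall_subset_cthickening hq δ hx)
    -- setup for the parametric Cauchy integral
    set μ : Measure ℝ := volume.restrict (Ioc (0 : ℝ) (2 * Real.pi)) with hμdef
    set Φ : (ℂ × (Fin m → ℂ)) → ℝ → ℂ := fun p θ =>
      deriv (circleMap 0 ρ) θ * ((circleMap 0 ρ θ - p.1)⁻¹ * f (circleMap 0 ρ θ, p.2)) with hΦdef
    set Jt : (ℂ × (Fin m → ℂ)) →L[ℂ] ℂ := ContinuousLinearMap.fst ℂ ℂ (Fin m → ℂ) with hJtdef
    set Jm : (ℂ × (Fin m → ℂ)) →L[ℂ] (ℂ × (Fin m → ℂ)) :=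
      (0 : (ℂ × (Fin m → ℂ)) →L[ℂ] ℂ).prod (ContinuousLinearMap.snd ℂ ℂ (Fin m → ℂ)) with hJmdef
    set Φ' : (ℂ × (Fin m → ℂ)) → ℝ → (ℂ × (Fin m → ℂ)) →L[ℂ] ℂ := fun p θ =>
      deriv (circleMap 0 ρ) θ •
        ((circleMap 0 ρ θ - p.1)⁻¹ • ((fderiv ℂ f (circleMap 0 ρ θ, p.2)).comp Jm) +
          f (circleMap 0 ρ θ, p.2) • ((((circleMap 0 ρ θ - p.1) ^ 2)⁻¹ : ℂ) • Jt)) with hΦ'def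
    set ε₂ : ℝ := min (ρ / 2) ε with hε₂def
    have hε₂ : 0 < ε₂ := lt_min (by positivity) hε
    -- basic facts about points in the small ball
    have hball : ∀ p : ℂ × (Fin m → ℂ), p ∈ ball ((0 : ℂ), a0) ε₂ →
        ‖p.1‖ < ρ / 2 ∧ p.2 ∈ closedBall a0 ε := by
      intro p hp
      rw [mem_ball, Prod.dist_eq, max_lt_iff] at hp
      constructor
      · have := hp.1; rw [dist_eq_norm, sub_zero] at this
        exact this.trans_le (min_le_left _ _)
      · exact ball_subset_closedBall (mem_ball.2 (hp.2.trans_le (min_le_right _ _)))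
    have hzsub : ∀ (θ : ℝ) (p : ℂ × (Fin m → ℂ)), ‖p.1‖ < ρ / 2 →
        ρ / 2 ≤ ‖circleMap 0 ρ θ - p.1‖ := by
      intro θ p hp
      have h1 : ‖circleMap 0 ρ θ‖ = ρ := by
        rw [norm_circleMap_zero, abs_of_pos hρ]
      have h2 := norm_sub_norm_le (circleMap 0 ρ θ) p.1
      rw [h1] at h2
      linarith
    have hzne : ∀ (θ : ℝ) (p : ℂ × (Fin m → ℂ)), ‖p.1‖ < ρ / 2 →
        circleMap 0 ρ θ - p.1 ≠ 0 := by
      intro θ p hp h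
      have := hzsub θ p hp
      rw [h, norm_zero] at this
      linarith
    have hmemK : ∀ (θ : ℝ) (p : ℂ × (Fin m → ℂ)), p.2 ∈ closedBall a0 ε →
        (circleMap 0 ρ θ, p.2) ∈ K := by
      intro θ p hp
      exact ⟨circleMap_mem_sphere 0 hρ.le θ, hp⟩
    -- differentiability of the integrand in the parameter
    have h_diff : ∀ (θ : ℝ), ∀ p ∈ ball (((0 : ℂ), a0) : ℂ × (Fin m → ℂ)) ε₂,
        HasFDerivAt (fun p => Φ p θ) (Φ' p θ) p := by
      intro θ p hp
      obtain ⟨hp1, hp2'⟩ := hball p hp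
      have hqS : (circleMap 0 ρ θ, p.2) ∈ S := hKS (hmemK θ p hp2')
      have hu : HasFDerivAt (fun p : ℂ × (Fin m → ℂ) => (circleMap 0 ρ θ - p.1)⁻¹)
          ((((circleMap 0 ρ θ - p.1) ^ 2)⁻¹ : ℂ) • Jt) p := by
        have h1 : HasDerivAt (fun t : ℂ => (circleMap 0 ρ θ - t)⁻¹)
            (((circleMap 0 ρ θ - p.1) ^ 2)⁻¹) p.1 := by
          have := ((hasDerivAt_id p.1).const_sub (circleMap 0 ρ θ)).inv (hzne θ p hp1)
          simpa [one_div, Pi.inv_def] using this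
        exact h1.comp_hasFDerivAt p hasFDerivAt_fst
      have hv : HasFDerivAt (fun p : ℂ × (Fin m → ℂ) => f (circleMap 0 ρ θ, p.2))
          ((fderiv ℂ f (circleMap 0 ρ θ, p.2)).comp Jm) p := by
        have hi : HasFDerivAt (fun p : ℂ × (Fin m → ℂ) => ((circleMap 0 ρ θ : ℂ), p.2)) Jm p :=
          (hasFDerivAt_const _ _).prodMk hasFDerivAt_snd
        exact ((hf.differentiableAt (hSopen.mem_nhds hqS)).hasFDerivAt).comp p hi
      exact (hu.mul hv).const_mul _
    -- bound for the derivative of the integrand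
    set Cb : ℝ := ρ * (2 / ρ * C + M * (2 / ρ) ^ 2) with hCbdef
    have h_bound : ∀ (θ : ℝ), ∀ p ∈ ball (((0 : ℂ), a0) : ℂ × (Fin m → ℂ)) ε₂,
        ‖Φ' p θ‖ ≤ Cb := by
      intro θ p hp
      obtain ⟨hp1, hp2'⟩ := hball p hp
      have hKmem : (circleMap 0 ρ θ, p.2) ∈ K := hmemK θ p hp2'
      have hfb : ‖f (circleMap 0 ρ θ, p.2)‖ ≤ M :=
        hMb _ (Metric.self_subset_cthickening K hKmem)
      have hdb : ‖fderiv ℂ f (circleMap 0 ρ θ, p.2)‖ ≤ C := hCb _ hKmem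
      have hJt : ‖Jt‖ ≤ 1 := by
        refine ContinuousLinearMap.opNorm_le_bound _ zero_le_one fun x => ?_
        rw [one_mul]; exact norm_fst_le x
      have hJm : ‖Jm‖ ≤ 1 := by
        refine ContinuousLinearMap.opNorm_le_bound _ zero_le_one fun x => ?_
        rw [one_mul]
        have : ‖Jm x‖ = ‖x.2‖ := by
          rw [hJmdef]
          simp [Prod.norm_def]
        rw [this]; exact norm_snd_le x
      have hinv : ‖((circleMap 0 ρ θ - p.1))⁻¹‖ ≤ 2 / ρ := by
        rw [norm_inv]
        rw [inv_le_comm₀ (lt_of_lt_of_le (by positivity) (hzsub θ p hp1)) (by positivity)]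
        calc (2 / ρ)⁻¹ = ρ / 2 := by field_simp
        _ ≤ ‖circleMap 0 ρ θ - p.1‖ := hzsub θ p hp1
      have hinv2 : ‖(((circleMap 0 ρ θ - p.1) ^ 2)⁻¹ : ℂ)‖ ≤ (2 / ρ) ^ 2 := by
        rw [norm_inv, norm_pow]
        rw [inv_le_comm₀ (pow_pos (lt_of_lt_of_le (by positivity) (hzsub θ p hp1)) 2)
          (by positivity)]
        calc ((2 / ρ) ^ 2)⁻¹ = (ρ / 2) ^ 2 := by rw [← inv_pow]; congr 1; field_simp
        _ ≤ ‖circleMap 0 ρ θ - p.1‖ ^ 2 := by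
            apply pow_le_pow_left₀ (by positivity) (hzsub θ p hp1)
      have hc : ‖deriv (circleMap 0 ρ) θ‖ = ρ := by
        rw [deriv_circleMap, norm_mul,
          norm_circleMap_zero, Complex.norm_I, mul_one, abs_of_pos hρ]
      simp only [hΦ'def]
      refine le_trans (norm_smul_le (deriv (circleMap 0 ρ) θ) ((circleMap 0 ρ θ - p.1)⁻¹ • ((fderiv ℂ f (circleMap 0 ρ θ, p.2)).comp Jm) + f (circleMap 0 ρ θ, p.2) • (((((circleMap 0 ρ θ - p.1)) ^ 2)⁻¹ : ℂ) • Jt))) ?_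
      rw [hc]
      refine mul_le_mul_of_nonneg_left ?_ hρ.le
      refine (norm_add_le _ _).trans ?_
      refine add_le_add ?_ ?_
      · refine le_trans (norm_smul_le (circleMap 0 ρ θ - p.1)⁻¹ ((fderiv ℂ f (circleMap 0 ρ θ, p.2)).comp Jm)) ?_
        calc ‖(circleMap 0 ρ θ - p.1)⁻¹‖ * ‖((fderiv ℂ f (circleMap 0 ρ θ, p.2)).comp Jm)‖
            ≤ (2 / ρ) * (C * 1) := by
              apply mul_le_mul hinv ?_ (norm_nonneg _) (by positivity)
              exact (ContinuousLinearMap.opNorm_comp_le _ _).trans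
                (mul_le_mul hdb hJm (norm_nonneg _) hC)
        _ = 2 / ρ * C := by ring
      · refine le_trans (norm_smul_le (f (circleMap 0 ρ θ, p.2)) (((((circleMap 0 ρ θ - p.1)) ^ 2)⁻¹ : ℂ) • Jt)) ?_
        refine le_trans (mul_le_mul_of_nonneg_left
          (norm_smul_le ((((circleMap 0 ρ θ - p.1) ^ 2)⁻¹ : ℂ)) Jt) (norm_nonneg _)) ?_
        calc ‖f (circleMap 0 ρ θ, p.2)‖ * (‖(((circleMap 0 ρ θ - p.1) ^ 2)⁻¹ : ℂ)‖ * ‖Jt‖)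
            ≤ M * ((2 / ρ) ^ 2 * 1) := by
              apply mul_le_mul hfb ?_ (by positivity) hM
              exact mul_le_mul hinv2 hJt (norm_nonneg _) (by positivity)
        _ = M * (2 / ρ) ^ 2 := by ring
    -- continuity of the integrand in θ
    have hcontΦ : ∀ p : ℂ × (Fin m → ℂ), ‖p.1‖ < ρ / 2 → p.2 ∈ closedBall a0 ε →
        Continuous (Φ p) := by
      intro p hq1 hq2
      have hc1 : Continuous fun θ : ℝ => deriv (circleMap 0 ρ) θ := by
        simp only [deriv_circleMap]
        exact (continuous_circleMap 0 ρ).mul continuous_const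
      have hc2 : Continuous fun θ : ℝ => (circleMap 0 ρ θ - p.1)⁻¹ :=
        ((continuous_circleMap 0 ρ).sub continuous_const).inv₀ fun θ => hzne θ p hq1
      have hc3 : Continuous fun θ : ℝ => f (circleMap 0 ρ θ, p.2) :=
        (hf.continuousOn).comp_continuous
          ((continuous_circleMap 0 ρ).prodMk continuous_const) fun θ => hKS (hmemK θ p hq2)
      exact hc1.mul (hc2.mul hc3)
    have h0ball : (((0 : ℂ), a0) : ℂ × (Fin m → ℂ)) ∈ ball (((0 : ℂ), a0) : ℂ × (Fin m → ℂ)) ε₂ :=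
      mem_ball_self hε₂
    have hF_meas : ∀ᶠ p in nhds (((0 : ℂ), a0) : ℂ × (Fin m → ℂ)),
        AEStronglyMeasurable (Φ p) μ := by
      filter_upwards [ball_mem_nhds _ hε₂] with p hp
      exact (hcontΦ p (hball p hp).1 (hball p hp).2).aestronglyMeasurable
    have hF_int : Integrable (Φ ((0 : ℂ), a0)) μ :=
      (hcontΦ _ (hball _ h0ball).1 (hball _ h0ball).2).integrableOn_Ioc
    have hF'_meas : AEStronglyMeasurable (Φ' ((0 : ℂ), a0)) μ := by
      have h1 : Measurable fun θ : ℝ => fderiv ℂ f (circleMap 0 ρ θ, (((0 : ℂ), a0) :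
          ℂ × (Fin m → ℂ)).2) :=
        (measurable_fderiv ℂ f).comp
          ((continuous_circleMap 0 ρ).prodMk continuous_const).measurable
      have hcompJm : Continuous fun T : (ℂ × (Fin m → ℂ)) →L[ℂ] ℂ => T.comp Jm :=
        ((ContinuousLinearMap.compL ℂ (ℂ × (Fin m → ℂ)) (ℂ × (Fin m → ℂ)) ℂ).flip Jm).continuous
      have h2 : StronglyMeasurable fun θ : ℝ =>
          (fderiv ℂ f (circleMap 0 ρ θ, (((0 : ℂ), a0) : ℂ × (Fin m → ℂ)).2)).comp Jm :=
        (hcompJm.measurable.comp h1).stronglyMeasurable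
      have hc1 : Continuous fun θ : ℝ => deriv (circleMap 0 ρ) θ := by
        simp only [deriv_circleMap]
        exact (continuous_circleMap 0 ρ).mul continuous_const
      have hc2 : Continuous fun θ : ℝ =>
          (circleMap 0 ρ θ - (((0 : ℂ), a0) : ℂ × (Fin m → ℂ)).1)⁻¹ :=
        ((continuous_circleMap 0 ρ).sub continuous_const).inv₀
          fun θ => hzne θ _ (hball _ h0ball).1
      have hc2' : Continuous fun θ : ℝ =>
          (((circleMap 0 ρ θ - (((0 : ℂ), a0) : ℂ × (Fin m → ℂ)).1) ^ 2)⁻¹ : ℂ) :=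
        (((continuous_circleMap 0 ρ).sub continuous_const).pow 2).inv₀
          fun θ => pow_ne_zero 2 (hzne θ _ (hball _ h0ball).1)
      have hc3 : Continuous fun θ : ℝ => f (circleMap 0 ρ θ, (((0 : ℂ), a0) :
          ℂ × (Fin m → ℂ)).2) :=
        (hf.continuousOn).comp_continuous
          ((continuous_circleMap 0 ρ).prodMk continuous_const)
          fun θ => hKS (hmemK θ _ (hball _ h0ball).2)
      refine StronglyMeasurable.aestronglyMeasurable ?_
      refine StronglyMeasurable.smul hc1.stronglyMeasurable ?_
      refine StronglyMeasurable.add ?_ ?_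
      · exact StronglyMeasurable.smul hc2.stronglyMeasurable h2
      · exact StronglyMeasurable.smul hc3.stronglyMeasurable
          ((hc2'.smul (continuous_const : Continuous fun _ : ℝ => Jt)).stronglyMeasurable)
    have h_bd_int : Integrable (fun _ : ℝ => Cb) μ :=
      integrableOn_const measure_Ioc_lt_top.ne
    have key : HasFDerivAt (fun p : ℂ × (Fin m → ℂ) => ∫ θ, Φ p θ ∂μ)
        (∫ θ, Φ' ((0 : ℂ), a0) θ ∂μ) (((0 : ℂ), a0) : ℂ × (Fin m → ℂ)) :=
      hasFDerivAt_integral_of_dominated_of_fderiv_le (ball_mem_nhds _ hε₂) hF_meas hF_int hF'_meas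
        (MeasureTheory.ae_of_all _ h_bound) h_bd_int (MeasureTheory.ae_of_all _ h_diff)
    set G : ℂ × (Fin m → ℂ) → ℂ :=
      fun p => (2 * Real.pi * Complex.I)⁻¹ * ∫ θ, Φ p θ ∂μ with hGdef
    have hGdiff : DifferentiableAt ℂ G (((0 : ℂ), a0) : ℂ × (Fin m → ℂ)) :=
      (key.differentiableAt).const_mul _
    have hGg : ∀ p : ℂ × (Fin m → ℂ), p.1 ∈ ball (0 : ℂ) ρ → p.2 ∈ P → G p = g p.2 p.1 := by
      intro p hq1 hq2
      have hint : (∫ θ, Φ p θ ∂μ) = ∮ z in C(0, ρ), (z - p.1)⁻¹ • f (z, p.2) := by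
        have hdef : (∮ z in C(0, ρ), (z - p.1)⁻¹ • f (z, p.2)) =
            ∫ θ in (0:ℝ)..(2 * Real.pi), deriv (circleMap 0 ρ) θ •
              ((circleMap 0 ρ θ - p.1)⁻¹ • f (circleMap 0 ρ θ, p.2)) := rfl
        rw [hdef, intervalIntegral.integral_of_le (by positivity)]
        rfl
      have hcongr : (∮ z in C(0, ρ), (z - p.1)⁻¹ • f (z, p.2)) =
          ∮ z in C(0, ρ), (z - p.1)⁻¹ • g p.2 z := by
        refine circleIntegral.integral_congr hρ.le fun z hz => ?_
        have hzρ : ‖z‖ = ρ := by simpa [dist_eq_norm] using hz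
        have hzD : z ∈ ball (0 : ℂ) r \ {0} := by
          constructor
          · simp only [mem_ball, dist_eq_norm, sub_zero]; rw [hzρ]; exact hρr
          · simp only [mem_singleton_iff]
            intro h; rw [h, norm_zero] at hzρ; exact hρ.ne' hzρ.symm
        simp only [hgf p.2 hq2 z hzD]
      have hcau : (∮ z in C(0, ρ), (z - p.1)⁻¹ • g p.2 z) =
          (2 * Real.pi * Complex.I : ℂ) • g p.2 p.1 :=
        DifferentiableOn.circleIntegral_sub_inv_smul
          ((hgd p.2 hq2).mono (closedBall_subset_ball hρr)) hq1
      simp only [hGdef]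
      rw [hint, hcongr, hcau, smul_eq_mul, inv_mul_cancel_left₀ Complex.two_pi_I_ne_zero]
    have heq2 : F =ᶠ[nhds (((0 : ℂ), a0) : ℂ × (Fin m → ℂ))] G := by
      have hop : IsOpen (ball (0 : ℂ) ρ ×ˢ ball a0 ε) := isOpen_ball.prod isOpen_ball
      filter_upwards [hop.mem_nhds ⟨mem_ball_self hρ, mem_ball_self hε⟩] with p hp
      rw [mem_prod] at hp
      have hq2 : p.2 ∈ P := hεP (ball_subset_closedBall hp.2)
      rw [hGg p hp.1 hq2]
      by_cases h : p.1 = 0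
      · simp only [hFdef, if_pos h, h]
      · have hmem : p.1 ∈ ball (0 : ℂ) r \ {0} := ⟨ball_subset_ball hρr.le hp.1, h⟩
        simp only [hFdef, if_neg h]
        rw [hgf p.2 hq2 p.1 hmem, Prod.mk.eta]
    exact (hGdiff.congr_of_eventuallyEq heq2).differentiableWithinAt
  · -- away from t = 0, `F` agrees with `f` near the point
    have hp0S : (t0, a0) ∈ S := by exact ⟨⟨hp1, h0⟩, hp2⟩
    have hfd : DifferentiableAt ℂ f (t0, a0) := hf.differentiableAt (hSopen.mem_nhds hp0S)
    have heq : F =ᶠ[nhds (t0, a0)] f := by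
      have : IsOpen {p : ℂ × (Fin m → ℂ) | p.1 ≠ 0} :=
        isOpen_compl_singleton.preimage continuous_fst
      filter_upwards [this.mem_nhds h0] with p hp
      simp [hFdef, hp]
    exact (hfd.congr_of_eventuallyEq heq).differentiableWithinAt
end

section
/- Fix τ in the complex upper half-plane, let Λ = ℤ + τℤ ⊂ ℂ, and let u be a half-period. Then there exist ε > 0 and a holomorphic function κ on the punctured disc {z ∈ ℂ : 0 < |z| < ε} such that κ(z)² = ℘(z) − ℘(u) for all such z and z·κ(z) → 1 as z → 0. Moreover any such κ satisfies κ(z) = 1/z − (℘(u)/2)·z + O(|z|³) and ℘(z) + κ′(z) = −℘(u)/2 + O(|z|²) as z → 0. -/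
open Filter Topology Asymptotics Metric

/-- The lattice `Λ = ℤ + τℤ ⊂ ℂ`. -/
def lattice (τ : ℂ) : Set ℂ := {z | ∃ m n : ℤ, z = (m : ℂ) + (n : ℂ) * τ}

/-- The Weierstrass `℘`-function of the lattice `ℤ + τℤ`. -/
noncomputable def wp (τ : ℂ) (z : ℂ) : ℂ :=
  1 / z ^ 2 + ∑' ω : {w : ℂ // w ∈ lattice τ ∧ w ≠ 0},
    (1 / (z - (ω : ℂ)) ^ 2 - 1 / (ω : ℂ) ^ 2)

namespace WPaux

/-- Index type of nonzero lattice points. -/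
abbrev S (τ : ℂ) := {w : ℂ // w ∈ lattice τ ∧ w ≠ 0}

/-- The regular part of `℘`. -/
noncomputable def g (τ : ℂ) (z : ℂ) : ℂ :=
  ∑' ω : S τ, (1 / (z - (ω : ℂ)) ^ 2 - 1 / (ω : ℂ) ^ 2)

lemma wp_eq (τ z : ℂ) : wp τ z = 1 / z ^ 2 + g τ z := rfl

lemma exists_mn (τ : ℂ) (ω : S τ) :
    ∃ p : Fin 2 → ℤ, (ω : ℂ) = (p 0 : ℂ) * τ + (p 1 : ℂ) := by
  obtain ⟨m, n, h⟩ := ω.2.1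
  exact ⟨![n, m], by simp [h]; ring⟩

noncomputable def j (τ : ℂ) (ω : S τ) : Fin 2 → ℤ := (exists_mn τ ω).choose

lemma j_spec (τ : ℂ) (ω : S τ) : (ω : ℂ) = (j τ ω 0 : ℂ) * τ + (j τ ω 1 : ℂ) :=
  (exists_mn τ ω).choose_spec

lemma j_inj (τ : ℂ) : Function.Injective (j τ) := fun a b h =>
  Subtype.ext (by rw [j_spec τ a, j_spec τ b, h])

lemma j_ne_zero (τ : ℂ) (ω : S τ) : j τ ω ≠ 0 := by
  intro h
  exact ω.2.2 (by rw [j_spec τ ω, h]; simp)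

lemma one_le_norm_j (τ : ℂ) (ω : S τ) : 1 ≤ ‖j τ ω‖ := by
  have h := j_ne_zero τ ω
  rw [EisensteinSeries.norm_eq_max_natAbs]
  have : (j τ ω 0).natAbs ≠ 0 ∨ (j τ ω 1).natAbs ≠ 0 := by
    by_contra hc
    push_neg at hc
    apply h
    funext i
    fin_cases i <;> simp [Int.natAbs_eq_zero.mp hc.1, Int.natAbs_eq_zero.mp hc.2]
  have : 1 ≤ (j τ ω 0).natAbs ⊔ (j τ ω 1).natAbs := by omega
  exact_mod_cast this

variable {τ : ℂ} (hτ : 0 < τ.im)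

/-- The Eisenstein `r` of the point `τ` in the upper half plane. -/
noncomputable def del (hτ : 0 < τ.im) : ℝ := EisensteinSeries.r ⟨τ, hτ⟩

lemma del_pos : 0 < del hτ := EisensteinSeries.r_pos _

lemma del_mul_le (ω : S τ) : del hτ * ‖j τ ω‖ ≤ ‖(ω : ℂ)‖ := by
  have h := EisensteinSeries.r_mul_max_le (⟨τ, hτ⟩ : UpperHalfPlane) (j_ne_zero τ ω)
  unfold del
  convert h using 2
  exact j_spec τ ω

lemma del_le_norm (ω : S τ) : del hτ ≤ ‖(ω : ℂ)‖ := by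
  calc del hτ = del hτ * 1 := by ring
    _ ≤ del hτ * ‖j τ ω‖ := by
        have := one_le_norm_j τ ω
        nlinarith [del_pos hτ]
    _ ≤ ‖(ω : ℂ)‖ := del_mul_le hτ ω

lemma summable_cube : Summable (fun ω : S τ => 5 * del hτ / ‖(ω : ℂ)‖ ^ 3) := by
  have h3 : (2 : ℝ) < 3 := by norm_num
  have hs : Summable fun x : Fin 2 → ℤ => ‖x‖ ^ (-(3:ℝ)) :=
    EisensteinSeries.summable_one_div_norm_rpow h3
  have hs2 : Summable fun ω : S τ =>
      (5 * del hτ * (del hτ)⁻¹ ^ 3) * ‖j τ ω‖ ^ (-(3:ℝ)) :=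
    ((hs.comp_injective (j_inj τ)).mul_left _)
  refine hs2.of_nonneg_of_le (fun ω => ?_) (fun ω => ?_)
  · have h1 : (0:ℝ) < del hτ := del_pos hτ
    have h2 : (0:ℝ) < ‖(ω : ℂ)‖ := lt_of_lt_of_le h1 (del_le_norm hτ ω)
    positivity
  have h1 : (0:ℝ) < del hτ := del_pos hτ
  have h2 : (0:ℝ) < ‖j τ ω‖ := lt_of_lt_of_le one_pos (one_le_norm_j τ ω)
  have hrw : ‖j τ ω‖ ^ (-(3:ℝ)) = (‖j τ ω‖ ^ (3:ℕ))⁻¹ := by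
    rw [show (-(3:ℝ)) = -((3:ℕ):ℝ) by norm_num, Real.rpow_neg (norm_nonneg _),
      Real.rpow_natCast]
  rw [hrw]
  have hml : del hτ * ‖j τ ω‖ ≤ ‖(ω : ℂ)‖ := del_mul_le hτ ω
  have hω : (0:ℝ) < ‖(ω : ℂ)‖ := lt_of_lt_of_le h1 (del_le_norm hτ ω)
  rw [div_le_iff₀ (by positivity)]
  have hcube : (del hτ * ‖j τ ω‖) ^ 3 ≤ ‖(ω : ℂ)‖ ^ 3 := by
    apply pow_le_pow_left₀ (by positivity) hml
  calc 5 * del hτ = (5 * del hτ * (del hτ)⁻¹ ^ 3 * (‖j τ ω‖ ^ 3)⁻¹) *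
        ((del hτ * ‖j τ ω‖) ^ 3) := by field_simp
    _ ≤ (5 * del hτ * (del hτ)⁻¹ ^ 3 * (‖j τ ω‖ ^ 3)⁻¹) * ‖(ω : ℂ)‖ ^ 3 := by
        apply mul_le_mul_of_nonneg_left hcube (by positivity)

lemma term_bound {δ : ℝ} (hδ : 0 < δ) {z w : ℂ} (hw : δ ≤ ‖w‖) (hz : ‖z‖ ≤ δ / 2) :
    ‖1 / (z - w) ^ 2 - 1 / w ^ 2‖ ≤ 5 * δ / ‖w‖ ^ 3 := by
  have hw0 : w ≠ 0 := by
    intro h; rw [h, norm_zero] at hw; linarith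
  have hwpos : (0:ℝ) < ‖w‖ := lt_of_lt_of_le hδ hw
  have hzw : ‖w‖ / 2 ≤ ‖z - w‖ := by
    have h1 : ‖w‖ - ‖z‖ ≤ ‖w - z‖ := norm_sub_norm_le w z
    rw [norm_sub_rev] at h1
    have : ‖z‖ ≤ ‖w‖ / 2 := le_trans hz (by linarith)
    linarith
  have hzw0 : z - w ≠ 0 := by
    intro h; rw [h, norm_zero] at hzw; linarith
  have key : 1 / (z - w) ^ 2 - 1 / w ^ 2 = z * (2 * w - z) / ((z - w) ^ 2 * w ^ 2) := by
    field_simp; ring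
  rw [key, norm_div, norm_mul, norm_mul, norm_pow, norm_pow]
  have hnum : ‖z‖ * ‖2 * w - z‖ ≤ (δ / 2) * (5 / 2 * ‖w‖) := by
    have h2 : ‖2 * w - z‖ ≤ 2 * ‖w‖ + ‖z‖ := by
      calc ‖2 * w - z‖ ≤ ‖2 * w‖ + ‖z‖ := norm_sub_le _ _
        _ = 2 * ‖w‖ + ‖z‖ := by rw [norm_mul]; norm_num
    have h3 : ‖2 * w - z‖ ≤ 5 / 2 * ‖w‖ := by
      have : ‖z‖ ≤ ‖w‖ / 2 := le_trans hz (by linarith)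
      linarith
    exact mul_le_mul hz h3 (norm_nonneg _) (by linarith)
  have hden : (‖w‖ / 2) ^ 2 * ‖w‖ ^ 2 ≤ ‖z - w‖ ^ 2 * ‖w‖ ^ 2 := by
    gcongr
  calc ‖z‖ * ‖2 * w - z‖ / (‖z - w‖ ^ 2 * ‖w‖ ^ 2)
      ≤ ((δ / 2) * (5 / 2 * ‖w‖)) / ((‖w‖ / 2) ^ 2 * ‖w‖ ^ 2) := by
        apply div_le_div₀ (by positivity) hnum (by positivity) hden
    _ = 5 * δ / ‖w‖ ^ 3 := by
        rw [div_eq_div_iff (by positivity) (by positivity)]; ring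

lemma g_diffOn : DifferentiableOn ℂ (g τ) (ball (0:ℂ) (del hτ / 2)) := by
  apply Complex.differentiableOn_tsum_of_summable_norm (summable_cube hτ)
  · intro ω
    apply DifferentiableOn.sub
    · apply DifferentiableOn.div (differentiableOn_const _)
      · exact (differentiableOn_id.sub (differentiableOn_const _)).pow 2
      · intro z hz
        simp only [mem_ball, dist_zero_right] at hz
        have h1 : del hτ ≤ ‖(ω : ℂ)‖ := del_le_norm hτ ω
        have : z ≠ (ω : ℂ) := by
          intro h; rw [h] at hz; linarith [del_pos hτ]
        exact pow_ne_zero 2 (sub_ne_zero.mpr this)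
    · exact differentiableOn_const _
  · exact isOpen_ball
  · intro ω z hz
    simp only [mem_ball, dist_zero_right] at hz
    exact term_bound (del_pos hτ) (del_le_norm hτ ω) hz.le


lemma g_zero (τ : ℂ) : g τ 0 = 0 := by
  have : ∀ ω : S τ, (1 / ((0:ℂ) - (ω : ℂ)) ^ 2 - 1 / (ω : ℂ) ^ 2) = 0 := by
    intro ω
    rw [zero_sub, neg_sq, sub_self]
  rw [g, tsum_congr this, tsum_zero]

/-- Negation as an equivalence of the set of nonzero lattice points. -/
def negEquiv (τ : ℂ) : S τ ≃ S τ where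
  toFun ω := ⟨-(ω : ℂ), by
    obtain ⟨m, n, h⟩ := ω.2.1
    exact ⟨⟨-m, -n, by push_cast [h]; ring⟩, neg_ne_zero.mpr ω.2.2⟩⟩
  invFun ω := ⟨-(ω : ℂ), by
    obtain ⟨m, n, h⟩ := ω.2.1
    exact ⟨⟨-m, -n, by push_cast [h]; ring⟩, neg_ne_zero.mpr ω.2.2⟩⟩
  left_inv ω := by simp
  right_inv ω := by simp

lemma g_even (τ z : ℂ) : g τ (-z) = g τ z := by
  rw [g, g, ← (negEquiv τ).tsum_eq]
  apply tsum_congr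
  intro ω
  have h1 : (-z - (-(ω : ℂ))) ^ 2 = (z - (ω : ℂ)) ^ 2 := by ring
  have h2 : (-(ω : ℂ)) ^ 2 = ((ω : ℂ)) ^ 2 := by ring
  simp only [negEquiv, Equiv.coe_fn_mk, h1, h2]

lemma g_analyticAt (hτ : 0 < τ.im) : AnalyticAt ℂ (g τ) 0 :=
  (g_diffOn hτ).analyticAt
    (ball_mem_nhds _ (by have := del_pos hτ; positivity))

lemma deriv_g_zero : deriv (g τ) 0 = 0 := by
  have heq : (fun z => g τ (-z)) = g τ := funext fun z => g_even τ z
  have h1 : deriv (fun z => g τ (-z)) 0 = -deriv (g τ) (-0) := deriv_comp_neg (g τ) 0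
  rw [heq, neg_zero] at h1
  have := h1
  linear_combination (1/2 : ℂ) * h1

/-- The function `G` with `g z = z ^ 2 * G z`. -/
noncomputable def G (τ : ℂ) : ℂ → ℂ := dslope (dslope (g τ) 0) 0

lemma G_analyticAt (hτ : 0 < τ.im) : AnalyticAt ℂ (G τ) 0 := by
  obtain ⟨p, hp⟩ := g_analyticAt hτ
  exact ⟨p.fslope.fslope,
    (hp.has_fpower_series_dslope_fslope).has_fpower_series_dslope_fslope⟩

lemma g_eq_sq_mul {z : ℂ} (hz : z ≠ 0) : g τ z = z ^ 2 * G τ z := by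
  have h1 : dslope (g τ) 0 z = g τ z / z := by
    rw [dslope_of_ne _ hz, slope_def_field, g_zero, sub_zero, sub_zero]
  have h2 : G τ z = (dslope (g τ) 0 z - dslope (g τ) 0 0) / z := by
    rw [G, dslope_of_ne _ hz, slope_def_field, sub_zero]
  rw [h2, h1, dslope_same, deriv_g_zero, sub_zero]
  field_simp


noncomputable def phi (τ c : ℂ) (z : ℂ) : ℂ := 1 - c * z ^ 2 + z ^ 4 * G τ z

noncomputable def psi (τ c : ℂ) (z : ℂ) : ℂ := Complex.exp (Complex.log (phi τ c z) / 2)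

noncomputable def DD (τ c : ℂ) (z : ℂ) : ℂ := psi τ c z + (1 - c / 2 * z ^ 2)

noncomputable def BB (τ c : ℂ) (z : ℂ) : ℂ := (G τ z - c ^ 2 / 4) / DD τ c z

noncomputable def kappa (τ c : ℂ) (z : ℂ) : ℂ := psi τ c z / z

lemma phi_zero (τ c : ℂ) : phi τ c 0 = 1 := by simp [phi]

lemma psi_zero (τ c : ℂ) : psi τ c 0 = 1 := by
  simp [psi, phi_zero, Complex.log_one]

lemma DD_zero (τ c : ℂ) : DD τ c 0 = 2 := by
  simp [DD, psi_zero]; ring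

lemma main (hτ : 0 < τ.im) (c : ℂ) :
    ∃ ε > (0:ℝ), ∃ κ : ℂ → ℂ,
      DifferentiableOn ℂ κ (ball (0:ℂ) ε \ {0}) ∧
      (∀ z ∈ ball (0:ℂ) ε \ {0}, κ z ^ 2 = wp τ z - c) ∧
      Tendsto (fun z => z * κ z) (𝓝[≠] (0:ℂ)) (𝓝 1) ∧
      (∀ z : ℂ, z ≠ 0 → κ z ≠ 0) ∧
      ((fun z => κ z - (1 / z - c / 2 * z)) =O[𝓝[≠] (0:ℂ)] fun z => z ^ 3) ∧
      ((fun z => wp τ z + deriv κ z - (-c / 2)) =O[𝓝[≠] (0:ℂ)] fun z => z ^ 2) := by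
  have hGa := G_analyticAt hτ
  have hGc : ContinuousAt (G τ) 0 := hGa.continuousAt
  -- continuity of phi, psi, DD at 0
  have hφc : ContinuousAt (phi τ c) 0 := by
    apply ContinuousAt.add
    · exact (continuousAt_const.sub ((continuousAt_const.mul
        ((continuousAt_id.pow 2)))))
    · exact (continuousAt_id.pow 4).mul hGc
  have hlog : ContinuousAt Complex.log (phi τ c 0) := by
    rw [phi_zero]
    exact (Complex.differentiableAt_log (by simp [Complex.mem_slitPlane_iff])).continuousAt
  have hψc : ContinuousAt (psi τ c) 0 :=
    ContinuousAt.cexp ((hlog.comp hφc).div_const 2)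
  have hDc : ContinuousAt (DD τ c) 0 := by
    apply hψc.add
    exact continuousAt_const.sub ((continuousAt_const.mul (continuousAt_id.pow 2)))
  -- eventual properties near 0
  have EA : ∀ᶠ z in 𝓝 (0:ℂ), AnalyticAt ℂ (G τ) z := hGa.eventually_analyticAt
  have EB : ∀ᶠ z in 𝓝 (0:ℂ), phi τ c z ∈ ball (1:ℂ) (1/2) := by
    have := hφc.preimage_mem_nhds (t := ball (1:ℂ) (1/2))
      (by rw [phi_zero]; exact ball_mem_nhds _ (by norm_num))
    exact eventually_of_mem this (fun z hz => hz)
  have EC : ∀ᶠ z in 𝓝 (0:ℂ), DD τ c z ∈ ball (2:ℂ) 1 := by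
    have := hDc.preimage_mem_nhds (t := ball (2:ℂ) 1)
      (by rw [DD_zero]; exact ball_mem_nhds _ (by norm_num))
    exact eventually_of_mem this (fun z hz => hz)
  obtain ⟨ε, hε, hball⟩ := eventually_nhds_iff_ball.mp ((EA.and EB).and EC)
  -- basic consequences on the ball
  have hA : ∀ z ∈ ball (0:ℂ) ε, AnalyticAt ℂ (G τ) z := fun z hz => (hball z hz).1.1
  have hslit : ∀ z ∈ ball (0:ℂ) ε, phi τ c z ∈ Complex.slitPlane := by
    intro z hz
    have h1 : ‖phi τ c z - 1‖ < 1/2 := by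
      have := (hball z hz).1.2
      rwa [mem_ball, dist_eq_norm] at this
    rw [Complex.mem_slitPlane_iff]
    left
    have h2 : |(phi τ c z - 1).re| ≤ ‖phi τ c z - 1‖ := Complex.abs_re_le_norm _
    have h3 : (phi τ c z - 1).re = (phi τ c z).re - 1 := by simp
    rw [h3] at h2
    have := abs_le.mp h2
    linarith [this.1]
  have hφne : ∀ z ∈ ball (0:ℂ) ε, phi τ c z ≠ 0 :=
    fun z hz => Complex.slitPlane_ne_zero (hslit z hz)
  have hDne : ∀ z ∈ ball (0:ℂ) ε, DD τ c z ≠ 0 := by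
    intro z hz h0
    have := (hball z hz).2
    rw [mem_ball, dist_eq_norm, h0] at this
    norm_num at this
  have hφd : ∀ z ∈ ball (0:ℂ) ε, DifferentiableAt ℂ (phi τ c) z := by
    intro z hz
    apply DifferentiableAt.add
    · exact (differentiableAt_const _).sub
        ((differentiableAt_const _).mul (differentiableAt_id.pow 2))
    · exact (differentiableAt_id.pow 4).mul (hA z hz).differentiableAt
  have hψd : ∀ z ∈ ball (0:ℂ) ε, DifferentiableAt ℂ (psi τ c) z := by
    intro z hz
    apply DifferentiableAt.cexp
    apply DifferentiableAt.div_const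
    exact (Complex.differentiableAt_log (hslit z hz)).comp z (hφd z hz)
  have hψsq : ∀ z ∈ ball (0:ℂ) ε, psi τ c z ^ 2 = phi τ c z := by
    intro z hz
    rw [psi, sq, ← Complex.exp_add, add_halves, Complex.exp_log (hφne z hz)]
  have hDd : ∀ z ∈ ball (0:ℂ) ε, DifferentiableAt ℂ (DD τ c) z := by
    intro z hz
    exact (hψd z hz).add ((differentiableAt_const _).sub
      ((differentiableAt_const _).mul (differentiableAt_id.pow 2)))
  have hBd : ∀ z ∈ ball (0:ℂ) ε, DifferentiableAt ℂ (BB τ c) z := by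
    intro z hz
    exact ((hA z hz).differentiableAt.sub (differentiableAt_const _)).div
      (hDd z hz) (hDne z hz)
  -- the expansion of psi
  have hψX : ∀ z ∈ ball (0:ℂ) ε,
      psi τ c z = 1 - c / 2 * z ^ 2 + z ^ 4 * BB τ c z := by
    intro z hz
    have h1 : (psi τ c z - (1 - c / 2 * z ^ 2)) * DD τ c z
        = z ^ 4 * (G τ z - c ^ 2 / 4) := by
      have h2 := hψsq z hz
      rw [DD]
      rw [phi] at h2
      linear_combination h2
    have h3 : psi τ c z - (1 - c / 2 * z ^ 2)
        = z ^ 4 * (G τ z - c ^ 2 / 4) / DD τ c z := by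
      rw [eq_div_iff (hDne z hz)]; exact h1
    rw [BB, ← mul_div_assoc, ← h3]; ring
  -- expansion of kappa
  have hκX : ∀ z ∈ ball (0:ℂ) ε \ {0},
      kappa τ c z = 1 / z - c / 2 * z + z ^ 3 * BB τ c z := by
    intro z hz
    obtain ⟨hz1, hz0⟩ := hz
    rw [Set.mem_singleton_iff] at hz0
    rw [kappa, hψX z hz1]
    field_simp
  refine ⟨ε, hε, kappa τ c, ?_, ?_, ?_, ?_, ?_, ?_⟩
  · -- differentiability
    intro z hz
    obtain ⟨hz1, hz0⟩ := hz
    rw [Set.mem_singleton_iff] at hz0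
    exact ((hψd z hz1).div differentiableAt_id hz0).differentiableWithinAt
  · -- square identity
    intro z hz
    obtain ⟨hz1, hz0⟩ := hz
    rw [Set.mem_singleton_iff] at hz0
    rw [kappa, div_pow, hψsq z hz1, wp_eq, g_eq_sq_mul hz0, phi]
    field_simp
    ring
  · -- tendsto
    have h1 : Tendsto (psi τ c) (𝓝[≠] (0:ℂ)) (𝓝 1) := by
      have := hψc.tendsto
      rw [psi_zero] at this
      exact this.mono_left nhdsWithin_le_nhds
    apply h1.congr'
    filter_upwards [self_mem_nhdsWithin] with z hz
    rw [Set.mem_compl_iff, Set.mem_singleton_iff] at hz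
    rw [kappa]
    field_simp
  · -- nonvanishing
    intro z hz
    exact div_ne_zero (Complex.exp_ne_zero _) hz
  · -- first big-O
    have hBc : ContinuousAt (BB τ c) 0 := by
      apply ContinuousAt.div (hGc.sub continuousAt_const) hDc
      rw [DD_zero]; norm_num
    have hBO : (BB τ c) =O[𝓝 (0:ℂ)] (fun _ => (1:ℂ)) := hBc.tendsto.isBigO_one ℂ
    have hO : (fun z : ℂ => z ^ 3 * BB τ c z) =O[𝓝 (0:ℂ)] (fun z => z ^ 3) := by
      simpa using (isBigO_refl (fun z : ℂ => z ^ 3) (𝓝 0)).mul hBO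
    have hball' : ball (0:ℂ) ε ∈ 𝓝[≠] (0:ℂ) :=
      nhdsWithin_le_nhds (ball_mem_nhds _ hε)
    apply (hO.mono nhdsWithin_le_nhds).congr' ?_ EventuallyEq.rfl
    filter_upwards [hball', self_mem_nhdsWithin] with z hz1 hz2
    rw [hκX z ⟨hz1, hz2⟩]
    ring
  · -- second big-O
    have hball' : ball (0:ℂ) ε ∈ 𝓝[≠] (0:ℂ) :=
      nhdsWithin_le_nhds (ball_mem_nhds _ hε)
    -- derivative of BB is continuous at 0
    have hBOn : DifferentiableOn ℂ (BB τ c) (ball (0:ℂ) ε) :=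
      fun z hz => (hBd z hz).differentiableWithinAt
    have hBan : AnalyticOnNhd ℂ (BB τ c) (ball (0:ℂ) ε) :=
      hBOn.analyticOnNhd isOpen_ball
    have hB'c : ContinuousAt (deriv (BB τ c)) 0 :=
      (hBan.deriv 0 (mem_ball_self hε)).continuousAt
    have hBc : ContinuousAt (BB τ c) 0 := by
      apply ContinuousAt.div (hGc.sub continuousAt_const) hDc
      rw [DD_zero]; norm_num
    -- deriv kappa formula
    have hderiv : ∀ z ∈ ball (0:ℂ) ε \ {0},
        deriv (kappa τ c) z = -(z^2)⁻¹ - c/2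
          + ((3:ℕ) * z ^ 2 * BB τ c z + z ^ 3 * deriv (BB τ c) z) := by
      intro z hz
      obtain ⟨hz1, hz0'⟩ := hz
      have hz0 : z ≠ 0 := hz0'
      have hUopen : IsOpen (ball (0:ℂ) ε \ {0}) :=
        isOpen_ball.sdiff isClosed_singleton
      have heq : kappa τ c =ᶠ[𝓝 z]
          (fun w => 1 / w - c / 2 * w + w ^ 3 * BB τ c w) := by
        filter_upwards [hUopen.mem_nhds ⟨hz1, hz0'⟩] with w hw
        exact hκX w hw
      rw [heq.deriv_eq]
      have hd1 : HasDerivAt (fun w : ℂ => 1 / w) (-(z^2)⁻¹) z := by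
        simpa [one_div] using hasDerivAt_inv hz0
      have hd2 : HasDerivAt (fun w : ℂ => c / 2 * w) (c / 2) z := by
        simpa using (hasDerivAt_id z).const_mul (c / 2)
      have hd3 : HasDerivAt (fun w : ℂ => w ^ 3 * BB τ c w)
          ((3:ℕ) * z ^ 2 * BB τ c z + z ^ 3 * deriv (BB τ c) z) z := by
        have h := (hasDerivAt_pow 3 z).mul (hBd z hz1).hasDerivAt
        simpa [Pi.mul_def] using h
      exact ((hd1.sub hd2).add hd3).deriv
    -- the bounding function
    set m : ℂ → ℂ := fun z => G τ z + (3:ℕ) * BB τ c z + z * deriv (BB τ c) z with hm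
    have hmc : ContinuousAt m 0 :=
      (hGc.add (continuousAt_const.mul hBc)).add (continuousAt_id.mul hB'c)
    have hmO : m =O[𝓝 (0:ℂ)] (fun _ => (1:ℂ)) := hmc.tendsto.isBigO_one ℂ
    have hO : (fun z : ℂ => z ^ 2 * m z) =O[𝓝 (0:ℂ)] (fun z => z ^ 2) := by
      simpa using (isBigO_refl (fun z : ℂ => z ^ 2) (𝓝 0)).mul hmO
    apply (hO.mono nhdsWithin_le_nhds).congr' ?_ EventuallyEq.rfl
    filter_upwards [hball', self_mem_nhdsWithin] with z hz1 hz2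
    have hz0 : z ≠ 0 := hz2
    rw [hderiv z ⟨hz1, hz2⟩, wp_eq, g_eq_sq_mul hz0, hm, one_div]
    ring

end WPaux
/-- Near `z = 0` there is a holomorphic square root `κ` of `℘(z) − ℘(u)` with
`z·κ(z) → 1`, and any such `κ` satisfies `κ(z) = 1/z − (℘(u)/2)z + O(z³)` and
`℘(z) + κ′(z) = −℘(u)/2 + O(z²)`. -/
theorem stmt2 (τ : ℂ) (hτ : 0 < τ.im) (u : ℂ)
    (hu2 : 2 * u ∈ lattice τ) (hu : u ∉ lattice τ) :
    (∃ ε > (0 : ℝ), ∃ κ : ℂ → ℂ,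
      DifferentiableOn ℂ κ (ball (0 : ℂ) ε \ {0}) ∧
      (∀ z ∈ ball (0 : ℂ) ε \ {0}, κ z ^ 2 = wp τ z - wp τ u) ∧
      Tendsto (fun z => z * κ z) (𝓝[≠] (0 : ℂ)) (𝓝 1)) ∧
    (∀ ε > (0 : ℝ), ∀ κ : ℂ → ℂ,
      DifferentiableOn ℂ κ (ball (0 : ℂ) ε \ {0}) →
      (∀ z ∈ ball (0 : ℂ) ε \ {0}, κ z ^ 2 = wp τ z - wp τ u) →
      Tendsto (fun z => z * κ z) (𝓝[≠] (0 : ℂ)) (𝓝 1) →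
      ((fun z => κ z - (1 / z - wp τ u / 2 * z)) =O[𝓝[≠] (0 : ℂ)] fun z => z ^ 3) ∧
      ((fun z => wp τ z + deriv κ z - (-(wp τ u) / 2)) =O[𝓝[≠] (0 : ℂ)] fun z => z ^ 2)) := by
  obtain ⟨ε₀, hε₀, κ₀, hd₀, hsq₀, ht₀, hne₀, hO1, hO2⟩ := WPaux.main hτ (wp τ u)
  constructor
  · exact ⟨ε₀, hε₀, κ₀, hd₀, hsq₀, ht₀⟩
  intro ε hε κ hd hsq ht
  -- κ agrees with κ₀ near 0
  have hq : Tendsto (fun z => κ z / κ₀ z) (𝓝[≠] (0:ℂ)) (𝓝 1) := by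
    have h1 : Tendsto (fun z => (z * κ z) / (z * κ₀ z)) (𝓝[≠] (0:ℂ)) (𝓝 1) := by
      have := ht.div ht₀ one_ne_zero
      simpa [Pi.div_def] using this
    apply h1.congr'
    filter_upwards [self_mem_nhdsWithin] with z hz
    have hz0 : z ≠ 0 := hz
    rw [mul_div_mul_left _ _ hz0]
  have heq : ∀ᶠ z in 𝓝[≠] (0:ℂ), κ z = κ₀ z := by
    have h1 : ∀ᶠ z in 𝓝[≠] (0:ℂ), ‖κ z / κ₀ z - 1‖ < 1 := by
      have h2 := Metric.tendsto_nhds.mp hq 1 one_pos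
      simpa [dist_eq_norm] using h2
    have hb1 : ball (0:ℂ) ε ∈ 𝓝[≠] (0:ℂ) :=
      nhdsWithin_le_nhds (ball_mem_nhds _ hε)
    have hb2 : ball (0:ℂ) ε₀ ∈ 𝓝[≠] (0:ℂ) :=
      nhdsWithin_le_nhds (ball_mem_nhds _ hε₀)
    filter_upwards [h1, hb1, hb2, self_mem_nhdsWithin] with z h1z h2z h3z h4z
    have hz0 : z ≠ 0 := h4z
    have hκ₀ne : κ₀ z ≠ 0 := hne₀ z hz0
    have hsqeq : κ z ^ 2 = κ₀ z ^ 2 := by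
      rw [hsq z ⟨h2z, h4z⟩, hsq₀ z ⟨h3z, h4z⟩]
    have hfac : (κ z - κ₀ z) * (κ z + κ₀ z) = 0 := by linear_combination hsqeq
    rcases mul_eq_zero.mp hfac with h | h
    · exact sub_eq_zero.mp h
    · exfalso
      have hneg : κ z = -κ₀ z := eq_neg_of_add_eq_zero_left h
      rw [hneg, neg_div, div_self hκ₀ne] at h1z
      norm_num at h1z
  -- derivatives agree near 0
  have heq' := eventually_nhdsWithin_iff.mp heq
  obtain ⟨r, hr, hreq⟩ := eventually_nhds_iff_ball.mp heq'
  have hUopen : IsOpen (ball (0:ℂ) r \ {0}) := isOpen_ball.sdiff isClosed_singleton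
  have hderiveq : ∀ᶠ z in 𝓝[≠] (0:ℂ), deriv κ z = deriv κ₀ z := by
    have hU : ball (0:ℂ) r \ {0} ∈ 𝓝[≠] (0:ℂ) := by
      rw [Set.diff_eq]
      exact Filter.inter_mem (nhdsWithin_le_nhds (ball_mem_nhds _ hr))
        self_mem_nhdsWithin
    filter_upwards [hU] with z hz
    have hzeq : κ =ᶠ[𝓝 z] κ₀ := by
      filter_upwards [hUopen.mem_nhds hz] with w hw
      exact hreq w hw.1 hw.2
    exact hzeq.deriv_eq
  constructor
  · apply hO1.congr' ?_ EventuallyEq.rfl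
    filter_upwards [heq] with z h
    rw [h]
  · apply hO2.congr' ?_ EventuallyEq.rfl
    filter_upwards [hderiveq] with z h
    rw [h]
end

section
/- Let A = ℂ[z₁, z₂, t]/(z₁z₂ − t²). Let M be the quotient of the free A-module A·e₁ ⊕ A·e₂ by the submodule generated by z₂·e₁ − t·e₂ and z₁·e₂ − t·e₁. Then the A-linear map A·e₁ ⊕ A·e₂ → A sending e₁ to z₁ + t and e₂ to z₂ + t annihilates both relations, and the induced A-linear map M → A is injective with image the ideal generated by z₁ + t and z₂ + t; in particular, M is isomorphic as an A-module to the ideal (z₁ + t, z₂ + t) ⊆ A. -/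
open MvPolynomial

/-- `A = ℂ[z₁, z₂, t] / (z₁z₂ − t²)`. -/
abbrev Anode : Type :=
  MvPolynomial (Fin 3) ℂ ⧸
    Ideal.span ({X 0 * X 1 - X 2 ^ 2} : Set (MvPolynomial (Fin 3) ℂ))

noncomputable def z₁ : Anode :=
  Ideal.Quotient.mk (Ideal.span ({X 0 * X 1 - X 2 ^ 2} : Set (MvPolynomial (Fin 3) ℂ))) (X 0)

noncomputable def z₂ : Anode :=
  Ideal.Quotient.mk (Ideal.span ({X 0 * X 1 - X 2 ^ 2} : Set (MvPolynomial (Fin 3) ℂ))) (X 1)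

noncomputable def tA : Anode :=
  Ideal.Quotient.mk (Ideal.span ({X 0 * X 1 - X 2 ^ 2} : Set (MvPolynomial (Fin 3) ℂ))) (X 2)

/-- The `A`-linear map `A·e₁ ⊕ A·e₂ → A`, `e₁ ↦ z₁ + t`, `e₂ ↦ z₂ + t`. -/
noncomputable def φnode : Anode × Anode →ₗ[Anode] Anode :=
  (LinearMap.toSpanSingleton Anode Anode (z₁ + tA)).coprod
    (LinearMap.toSpanSingleton Anode Anode (z₂ + tA))

lemma prime_X0 : Prime (X 0 : MvPolynomial (Fin 3) ℂ) := by
  rw [← MulEquiv.prime_iff (MvPolynomial.finSuccEquiv ℂ 2).toMulEquiv]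
  have : (MvPolynomial.finSuccEquiv ℂ 2).toMulEquiv (X 0) = Polynomial.X :=
    MvPolynomial.finSuccEquiv_X_zero
  rw [this]
  exact Polynomial.prime_X

private noncomputable def shiftEquiv : MvPolynomial (Fin 3) ℂ ≃ₐ[ℂ] MvPolynomial (Fin 3) ℂ :=
  AlgEquiv.ofAlgHom
    (aeval (fun i => if i = 0 then X 1 + X 2 else if i = 1 then X 0 else X 2))
    (aeval (fun i => if i = 0 then X 1 else if i = 1 then X 0 - X 2 else X 2))
    (by ext i : 1; fin_cases i <;> simp)
    (by ext i : 1; fin_cases i <;> simp)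

lemma prime_X1_add_X2 : Prime (X 1 + X 2 : MvPolynomial (Fin 3) ℂ) := by
  have h := (MulEquiv.prime_iff shiftEquiv.toMulEquiv).mpr prime_X0
  have : shiftEquiv.toMulEquiv (X 0) = X 1 + X 2 := by
    simp [shiftEquiv, AlgEquiv.ofAlgHom]
  rwa [this] at h

lemma not_dvd_key : ¬ (X 1 + X 2 : MvPolynomial (Fin 3) ℂ) ∣ (X 0 + X 2) := by
  rintro ⟨q, hq⟩
  have := congrArg (aeval (fun i => if i = 0 then X 0 else if i = 1 then -X 2 else X 2 :
    Fin 3 → MvPolynomial (Fin 3) ℂ)) hq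
  simp at this
  have h2 := congrArg (aeval (fun i => if i = 0 then (1:ℂ) else 0)) this
  simp at h2

set_option maxHeartbeats 1000000
set_option synthInstance.maxHeartbeats 400000

private noncomputable abbrev Inode : Ideal (MvPolynomial (Fin 3) ℂ) :=
  Ideal.span ({X 0 * X 1 - X 2 ^ 2} : Set (MvPolynomial (Fin 3) ℂ))

private lemma phi_mk (p q : MvPolynomial (Fin 3) ℂ) :
    φnode (Ideal.Quotient.mk Inode p, Ideal.Quotient.mk Inode q) =
      Ideal.Quotient.mk Inode (p * (X 0 + X 2) + q * (X 1 + X 2)) := by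
  simp only [φnode, LinearMap.coprod_apply, LinearMap.toSpanSingleton_apply, smul_eq_mul,
    z₁, z₂, tA, map_add, map_mul]

/-- The map `e₁ ↦ z₁ + t`, `e₂ ↦ z₂ + t` kills the relations `z₂e₁ − te₂` and
`z₁e₂ − te₁`, its kernel is exactly the submodule generated by those relations
(so the induced map `M → A` is injective), its image is the ideal
`(z₁ + t, z₂ + t)`, and hence `M ≅ (z₁ + t, z₂ + t)` as `A`-modules. -/
theorem stmt9 :
    φnode (z₂, -tA) = 0 ∧ φnode (-tA, z₁) = 0 ∧
    LinearMap.ker φnode =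
      Submodule.span Anode ({(z₂, -tA), (-tA, z₁)} : Set (Anode × Anode)) ∧
    LinearMap.range φnode = (Ideal.span {z₁ + tA, z₂ + tA} : Ideal Anode) ∧
    Nonempty
      (((Anode × Anode) ⧸
          Submodule.span Anode ({(z₂, -tA), (-tA, z₁)} : Set (Anode × Anode))) ≃ₗ[Anode]
        (Ideal.span {z₁ + tA, z₂ + tA} : Ideal Anode)) := by
  set mk := Ideal.Quotient.mk Inode with hmkdef
  have h1 : φnode (z₂, -tA) = 0 := by
    have : (z₂, -tA) = (mk (X 1), mk (-X 2)) := by simp [z₂, tA, hmkdef]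
    rw [this, phi_mk, show (X 1 : MvPolynomial (Fin 3) ℂ) * (X 0 + X 2) + (-X 2) * (X 1 + X 2)
      = X 0 * X 1 - X 2 ^ 2 by ring]
    exact Ideal.Quotient.eq_zero_iff_mem.mpr (Ideal.subset_span rfl)
  have h2 : φnode (-tA, z₁) = 0 := by
    have : (-tA, z₁) = (mk (-X 2), mk (X 0)) := by simp [z₁, tA, hmkdef]
    rw [this, phi_mk, show (-X 2 : MvPolynomial (Fin 3) ℂ) * (X 0 + X 2) + X 0 * (X 1 + X 2)
      = X 0 * X 1 - X 2 ^ 2 by ring]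
    exact Ideal.Quotient.eq_zero_iff_mem.mpr (Ideal.subset_span rfl)
  have hker : LinearMap.ker φnode =
      Submodule.span Anode ({(z₂, -tA), (-tA, z₁)} : Set (Anode × Anode)) := by
    apply le_antisymm
    · rintro ⟨a, b⟩ hab
      obtain ⟨A, rfl⟩ := Ideal.Quotient.mk_surjective a
      obtain ⟨B, rfl⟩ := Ideal.Quotient.mk_surjective b
      rw [LinearMap.mem_ker, phi_mk, Ideal.Quotient.eq_zero_iff_mem,
        Ideal.mem_span_singleton] at hab
      obtain ⟨P, hP⟩ := hab
      have hdvd : (X 1 + X 2 : MvPolynomial (Fin 3) ℂ) ∣ (X 0 + X 2) * (A - P * X 1) :=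
        ⟨-(B + P * X 2), by linear_combination hP⟩
      rcases prime_X1_add_X2.2.2 _ _ hdvd with h | h
      · exact absurd h not_dvd_key
      obtain ⟨G, hG⟩ := h
      have hA : A = P * X 1 + (X 1 + X 2) * G := by linear_combination hG
      have hB : B = -(P * X 2) - (X 0 + X 2) * G := by
        have hne : (X 1 + X 2 : MvPolynomial (Fin 3) ℂ) ≠ 0 := prime_X1_add_X2.1
        apply mul_left_cancel₀ hne
        linear_combination hP - (X 0 + X 2) * hG
      refine Submodule.mem_span_pair.mpr ⟨mk (P + G), mk (-G), ?_⟩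
      rw [Prod.ext_iff]
      constructor
      · show mk (P + G) * z₂ + mk (-G) * (-tA) = mk A
        have h : mk A = mk ((P + G) * X 1 + (-G) * (-(X 2))) := congrArg mk (by rw [hA]; ring)
        simp only [map_add, map_mul, map_neg] at h ⊢
        rw [h, z₂, tA, hmkdef]
      · show mk (P + G) * (-tA) + mk (-G) * z₁ = mk B
        have h : mk B = mk ((P + G) * (-(X 2)) + (-G) * X 0) := congrArg mk (by rw [hB]; ring)
        simp only [map_add, map_mul, map_neg] at h ⊢
        rw [h, z₁, tA, hmkdef]
    · rw [Submodule.span_le]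
      rintro x hx
      rcases hx with rfl | rfl
      · exact LinearMap.mem_ker.mpr h1
      · exact LinearMap.mem_ker.mpr h2
  have hrange : LinearMap.range φnode = (Ideal.span {z₁ + tA, z₂ + tA} : Ideal Anode) := by
    rw [φnode, LinearMap.range_coprod, ← LinearMap.span_singleton_eq_range,
      ← LinearMap.span_singleton_eq_range]
    rw [Ideal.span_insert]
  exact ⟨h1, h2, hker, hrange,
    ⟨(Submodule.quotEquivOfEq _ _ hker.symm).trans
      ((LinearMap.quotKerEquivRange φnode).trans (LinearEquiv.ofEq _ _ hrange))⟩⟩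
end
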